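/- Define c̃(ζ) := −(2 λ″(|ζ|²)|ζ|² + 2 λ′(|ζ|²)) / λ′(|ζ|²) for ζ ∈ ℝ² with ζ ≠ 0. There exists a constant C > 0 such that for every sign ν ∈ {+1, −1} and all ξ, η ∈ ℝ² with 0 < |η| ≤ 2^{−10} |ξ|: |(L̂_ξ + L̂_η) Φ^{+1,ν}(ξ, η) − c̃(ξ−η) Φ^{+1,ν}(ξ, η)| ≤ C |η|², where L̂_ξ := −ξ·∇_ξ and L̂_η := −η·∇_η. -/

import Mathlib

noncomputable section

abbrev E2 : Type := EuclideanSpace ℝ (Fin 2)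

/-- Euclidean dot product on ℝ². -/
def dotE (x y : E2) : ℝ := ∑ i : Fin 2, x i * y i

/-- `Λ(r) = r^{3/2} (tanh r)^{1/2}`. -/
def Lam (r : ℝ) : ℝ := r ^ ((3 : ℝ) / 2) * Real.sqrt (Real.tanh r)

/-- `λ(x) = Λ(√x)`. -/
def lam (x : ℝ) : ℝ := Lam (Real.sqrt x)

/-- The phase `Φ^{μ,ν}(ξ,η) = Λ(|ξ|) − μ Λ(|ξ−η|) − ν Λ(|η|)`. -/
def Phi (μ ν : ℝ) (ξ η : E2) : ℝ := Lam ‖ξ‖ - μ * Lam ‖ξ - η‖ - ν * Lam ‖η‖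

/-- `c̃(ζ) = −(2λ″(|ζ|²)|ζ|² + 2λ′(|ζ|²)) / λ′(|ζ|²)`. -/
def ctilde (ζ : E2) : ℝ :=
  -(2 * deriv (deriv lam) (‖ζ‖ ^ 2) * ‖ζ‖ ^ 2 + 2 * deriv lam (‖ζ‖ ^ 2)) / deriv lam (‖ζ‖ ^ 2)


open Real

/-- helper: monotone from nonneg derivative on `[0,∞)` -/
lemma mono_of_deriv_nonneg' {f f' : ℝ → ℝ} (hd : ∀ x, 0 ≤ x → HasDerivAt f (f' x) x)
    (h' : ∀ x, 0 ≤ x → 0 ≤ f' x) {a b : ℝ} (ha : 0 ≤ a) (hab : a ≤ b) : f a ≤ f b := by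
  have hmono : MonotoneOn f (Set.Ici (0:ℝ)) := by
    apply monotoneOn_of_deriv_nonneg (convex_Ici 0)
    · exact fun x hx => ((hd x hx).continuousAt).continuousWithinAt
    · intro x hx
      rw [interior_Ici] at hx
      exact ((hd x (le_of_lt hx)).differentiableAt).differentiableWithinAt
    · intro x hx
      rw [interior_Ici] at hx
      rw [(hd x (le_of_lt hx)).deriv]
      exact h' x (le_of_lt hx)
  exact hmono ha (le_trans ha hab) hab

lemma tanh_nonneg' {x : ℝ} (hx : 0 ≤ x) : 0 ≤ Real.tanh x := by
  rw [Real.tanh_eq_sinh_div_cosh]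
  exact div_nonneg (by simpa using Real.sinh_nonneg_iff.2 hx) (Real.cosh_pos x).le

lemma tanh_pos' {x : ℝ} (hx : 0 < x) : 0 < Real.tanh x := by
  rw [Real.tanh_eq_sinh_div_cosh]
  exact div_pos (by simpa using Real.sinh_pos_iff.2 hx) (Real.cosh_pos x)

lemma tanh_lt_one' (x : ℝ) : Real.tanh x < 1 := by
  rw [Real.tanh_eq_sinh_div_cosh, div_lt_one (Real.cosh_pos x)]
  exact Real.sinh_lt_cosh x

lemma hasDerivAt_tanh' (x : ℝ) : HasDerivAt Real.tanh (1 - Real.tanh x ^ 2) x := by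
  have h : HasDerivAt (fun y => Real.sinh y / Real.cosh y)
      ((Real.cosh x * Real.cosh x - Real.sinh x * Real.sinh x) / Real.cosh x ^ 2) x :=
    (Real.hasDerivAt_sinh x).div (Real.hasDerivAt_cosh x) (Real.cosh_pos x).ne'
  have : Real.tanh = fun y => Real.sinh y / Real.cosh y := by
    funext y; exact Real.tanh_eq_sinh_div_cosh y
  rw [this]
  convert h using 1
  have hcp := (Real.cosh_pos x).ne'
  show 1 - (Real.sinh x / Real.cosh x) ^ 2 = _
  field_simp

lemma tanh_le_self' {x : ℝ} (hx : 0 ≤ x) : Real.tanh x ≤ x := by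
  have key : Real.sinh x ≤ x * Real.cosh x := by
    have := mono_of_deriv_nonneg' (f := fun y => y * Real.cosh y - Real.sinh y)
      (f' := fun y => y * Real.sinh y)
      (fun y _ => by
        have h1 : HasDerivAt (fun y : ℝ => y * Real.cosh y)
            (1 * Real.cosh y + y * Real.sinh y) y :=
          (hasDerivAt_id y).mul (Real.hasDerivAt_cosh y)
        have h2 := h1.sub (Real.hasDerivAt_sinh y)
        refine h2.congr_deriv ?_; ring)
      (fun y hy => mul_nonneg hy (by simpa using Real.sinh_nonneg_iff.2 hy)) le_rfl hx
    simp at this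
    linarith
  rw [Real.tanh_eq_sinh_div_cosh, div_le_iff₀ (Real.cosh_pos x)]
  linarith

lemma tanh_ge_cubic' {x : ℝ} (hx : 0 ≤ x) : x - x ^ 3 / 3 ≤ Real.tanh x := by
  have := mono_of_deriv_nonneg' (f := fun y => Real.tanh y - y + y ^ 3 / 3)
    (f' := fun y => y ^ 2 - Real.tanh y ^ 2)
    (fun y _ => by
      have h := ((hasDerivAt_tanh' y).sub (hasDerivAt_id y)).add
        ((hasDerivAt_pow 3 y).div_const 3)
      refine h.congr_deriv ?_; push_cast; ring)
    (fun y hy => by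
      show (0:ℝ) ≤ y ^ 2 - Real.tanh y ^ 2
      have h1 := tanh_nonneg' hy
      have h2 := tanh_le_self' hy
      nlinarith) le_rfl hx
  simp [Real.tanh_zero] at this
  linarith

lemma tanh_ge_exp' {x : ℝ} (hx : 0 ≤ x) : 1 - 2 * Real.exp (-(2 * x)) ≤ Real.tanh x := by
  rw [Real.tanh_eq_sinh_div_cosh, Real.sinh_eq, Real.cosh_eq]
  have hE : 0 < Real.exp x := Real.exp_pos x
  have hE2 : Real.exp (-(2 * x)) = 1 / Real.exp x ^ 2 := by
    rw [Real.exp_neg]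
    congr 1
    rw [two_mul, Real.exp_add]; ring
  have hEn : Real.exp (-x) = (Real.exp x)⁻¹ := Real.exp_neg x
  have hE2 : Real.exp (-(2 * x)) = (Real.exp x ^ 2)⁻¹ := by
    rw [Real.exp_neg, two_mul, Real.exp_add, sq]
  rw [hEn, hE2, ← sub_nonneg]
  have hkey : (Real.exp x - (Real.exp x)⁻¹) / 2 / ((Real.exp x + (Real.exp x)⁻¹) / 2) -
      (1 - 2 * (Real.exp x ^ 2)⁻¹) = 2 / (Real.exp x ^ 2 * (Real.exp x ^ 2 + 1)) := by
    field_simp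
    ring
  rw [hkey]
  positivity

lemma sech_sq_le' {x : ℝ} (hx : 0 ≤ x) : 1 - Real.tanh x ^ 2 ≤ 4 * Real.exp (-(2 * x)) := by
  have h1 := tanh_ge_exp' hx
  have h2 := tanh_le_self' hx
  have h3 := tanh_nonneg' hx
  have h4 := (tanh_lt_one' x).le
  nlinarith [Real.exp_pos (-(2*x))]
lemma tanh_ge_of_one_le {x : ℝ} (hx : 1 ≤ x) : 7/10 ≤ Real.tanh x := by
  have h1 := tanh_ge_exp' (by linarith : (0:ℝ) ≤ x)
  have h2 : Real.exp (-(2 * x)) ≤ Real.exp (-2) := Real.exp_le_exp.2 (by linarith)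
  have h3 : Real.exp (-2) ≤ 3/20 := by
    rw [Real.exp_neg, inv_le_comm₀ (Real.exp_pos 2) (by norm_num)]
    have h27 : (2.7 : ℝ) ^ 2 ≤ Real.exp 1 ^ 2 := by
      have := Real.exp_one_gt_d9
      nlinarith
    calc ((3:ℝ)/20)⁻¹ = 20/3 := by norm_num
    _ ≤ 2.7^2 := by norm_num
    _ ≤ Real.exp 1 ^ 2 := h27
    _ = Real.exp 2 := by rw [← Real.exp_nat_mul]; norm_num
  linarith

lemma cube_sech_le {x : ℝ} (hx : 0 ≤ x) : x ^ 3 * (1 - Real.tanh x ^ 2) ≤ 14 := by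
  rcases le_total x 1 with h | h
  · have h1 := tanh_nonneg' hx
    have h2 := (tanh_lt_one' x).le
    have h3 : x ^ 3 ≤ 1 := pow_le_one₀ hx h
    have h4 : 0 ≤ 1 - Real.tanh x ^ 2 := by nlinarith
    have h5 : x ^ 3 * (1 - Real.tanh x ^ 2) ≤ 1 * 1 :=
      mul_le_mul h3 (by nlinarith) h4 zero_le_one
    linarith
  · have h1 := sech_sq_le' hx
    have h2 : x ^ 3 ≤ 27/8 * Real.exp (2 * x) := by
      have ha : 2 * x / 3 ≤ Real.exp (2 * x / 3) := by
        linarith [Real.add_one_le_exp (2 * x / 3)]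
      have hb : (2 * x / 3) ^ 3 ≤ Real.exp (2 * x / 3) ^ 3 := by
        apply pow_le_pow_left₀ (by linarith) ha
      have hc : Real.exp (2 * x / 3) ^ 3 = Real.exp (2 * x) := by
        rw [← Real.exp_nat_mul]; congr 1; ring
      nlinarith
    have h3 : Real.exp (2 * x) * Real.exp (-(2 * x)) = 1 := by
      rw [← Real.exp_add]; simp
    have h4 : 0 ≤ 1 - Real.tanh x ^ 2 := by
      nlinarith [tanh_lt_one' x, tanh_nonneg' hx]
    calc x ^ 3 * (1 - Real.tanh x ^ 2) ≤ 27/8 * Real.exp (2*x) * (4 * Real.exp (-(2*x))) := by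
          apply mul_le_mul h2 h1 h4 (by positivity)
    _ = 27/2 * (Real.exp (2*x) * Real.exp (-(2*x))) := by ring
    _ ≤ 14 := by rw [h3]; norm_num

/-! ### the substituted functions -/

def tth (s : ℝ) : ℝ := Real.sqrt (Real.tanh (s ^ 2))

lemma tth_sq {s : ℝ} : tth s ^ 2 = Real.tanh (s ^ 2) :=
  Real.sq_sqrt (tanh_nonneg' (by positivity))

lemma tth_pos {s : ℝ} (hs : 0 < s) : 0 < tth s :=
  Real.sqrt_pos.2 (tanh_pos' (by positivity))

lemma tth_le {s : ℝ} (hs : 0 ≤ s) : tth s ≤ s := by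
  have : tth s ≤ Real.sqrt (s ^ 2) := Real.sqrt_le_sqrt (tanh_le_self' (by positivity))
  rwa [Real.sqrt_sq hs] at this

lemma tth_lt_one {s : ℝ} : tth s ^ 4 < 1 := by
  have h1 : tth s ^ 4 = Real.tanh (s ^ 2) ^ 2 := by
    rw [show (4:ℕ) = 2*2 from rfl, pow_mul, tth_sq]
  rw [h1]
  nlinarith [tanh_lt_one' (s ^ 2), tanh_nonneg' (sq_nonneg s)]

/-- lower bound for `tanh` on small arguments, in terms of `t² ≥ (2/3) s²`. -/
lemma tth_sq_ge {s : ℝ} (hs : 0 < s) (h1 : s ^ 2 ≤ 1) : 2/3 * s ^ 2 ≤ tth s ^ 2 := by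
  rw [tth_sq]
  have h2 := tanh_ge_cubic' (sq_nonneg s)
  have hcube : (s ^ 2) ^ 3 ≤ s ^ 2 := by nlinarith [sq_nonneg s, sq_nonneg (s * s)]
  linarith

lemma tth_sq_ge' {s : ℝ} (h1 : 1 ≤ s ^ 2) : 7/10 ≤ tth s ^ 2 := by
  rw [tth_sq]; exact tanh_ge_of_one_le h1

/-- A1 bound : `s²(1-t⁴)/t² ≤ 20`. -/
lemma A1_bound {s : ℝ} (hs : 0 < s) : s ^ 2 * (1 - tth s ^ 4) / tth s ^ 2 ≤ 20 := by
  have ht : 0 < tth s ^ 2 := pow_pos (tth_pos hs) 2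
  rw [div_le_iff₀ ht]
  rcases le_total (s ^ 2) 1 with h | h
  · have h23 := tth_sq_ge hs h
    nlinarith [mul_nonneg (sq_nonneg s) (by positivity : (0:ℝ) ≤ tth s ^ 4)]
  · have h7 := tth_sq_ge' h
    have h14 : (s ^ 2) ^ 3 * (1 - Real.tanh (s ^ 2) ^ 2) ≤ 14 := cube_sech_le (sq_nonneg s)
    rw [← tth_sq, show ((tth s ^ 2) ^ 2 : ℝ) = tth s ^ 4 from by ring] at h14
    have hσ : 0 ≤ 1 - tth s ^ 4 := tth_lt_one.le |> fun h => by linarith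
    have hpow : s ^ 2 ≤ (s ^ 2) ^ 3 := by
      nlinarith [mul_le_mul_of_nonneg_left (show (1:ℝ) ≤ (s ^ 2) ^ 2 by nlinarith) (sq_nonneg s)]
    have hmul := mul_le_mul_of_nonneg_right hpow hσ
    linarith

lemma A2_bound {s : ℝ} (hs : 0 < s) : s ^ 4 * (1 - tth s ^ 4) / tth s ^ 4 ≤ 29 := by
  have ht : 0 < tth s := tth_pos hs
  have ht4 : 0 < tth s ^ 4 := by positivity
  rw [div_le_iff₀ ht4]
  have hσ : 0 ≤ 1 - tth s ^ 4 := tth_lt_one.le |> fun h => by linarith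
  rcases le_total (s ^ 2) 1 with h | h
  · have h23 := tth_sq_ge hs h
    have hsq : (2/3 * s^2) * (2/3 * s^2) ≤ tth s ^ 2 * tth s ^ 2 :=
      mul_le_mul h23 h23 (by positivity) (by positivity)
    nlinarith [mul_nonneg (by positivity : (0:ℝ) ≤ s ^ 4) (by positivity : (0:ℝ) ≤ tth s ^ 4)]
  · have h7 := tth_sq_ge' h
    have h14 : (s ^ 2) ^ 3 * (1 - Real.tanh (s ^ 2) ^ 2) ≤ 14 := cube_sech_le (sq_nonneg s)
    rw [← tth_sq] at h14
    nlinarith [sq_nonneg s]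

lemma A3_bound {s : ℝ} (hs : 0 < s) : s ^ 6 * (1 - tth s ^ 4) / tth s ^ 6 ≤ 42 := by
  have ht : 0 < tth s := tth_pos hs
  have ht6 : 0 < tth s ^ 6 := by positivity
  rw [div_le_iff₀ ht6]
  have hσ : 0 ≤ 1 - tth s ^ 4 := tth_lt_one.le |> fun h => by linarith
  rcases le_total (s ^ 2) 1 with h | h
  · have h23 := tth_sq_ge hs h
    have hsq : (2/3 * s^2) * (2/3 * s^2) ≤ tth s ^ 2 * tth s ^ 2 :=
      mul_le_mul h23 h23 (by positivity) (by positivity)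
    have hcube : (2/3 * s^2) * (2/3 * s^2) * (2/3 * s^2) ≤ tth s ^ 2 * tth s ^ 2 * tth s ^ 2 :=
      mul_le_mul hsq h23 (by positivity) (by positivity)
    nlinarith [mul_nonneg (by positivity : (0:ℝ) ≤ s ^ 6) (by positivity : (0:ℝ) ≤ tth s ^ 4)]
  · have h7 := tth_sq_ge' h
    have h14 : (s ^ 2) ^ 3 * (1 - Real.tanh (s ^ 2) ^ 2) ≤ 14 := cube_sech_le (sq_nonneg s)
    rw [← tth_sq] at h14
    nlinarith [sq_nonneg s, sq_nonneg (tth s)]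
def mm1 (s : ℝ) : ℝ := (3 * tth s ^ 2 + s ^ 2 * (1 - tth s ^ 4)) / (4 * s * tth s)

def mm2 (s : ℝ) : ℝ :=
  (-3 * tth s ^ 4 + 4 * s ^ 2 * tth s ^ 2 - 4 * s ^ 2 * tth s ^ 6 - s ^ 4
      - 2 * s ^ 4 * tth s ^ 4 + 3 * s ^ 4 * tth s ^ 8) / (16 * s ^ 5 * tth s ^ 3)

def mm3 (s : ℝ) : ℝ :=
  (15 * tth s ^ 6 - 15 * s ^ 2 * tth s ^ 4 + 15 * s ^ 2 * tth s ^ 8 - 3 * s ^ 4 * tth s ^ 2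
      - 6 * s ^ 4 * tth s ^ 6 + 9 * s ^ 4 * tth s ^ 10 + 3 * s ^ 6 - 5 * s ^ 6 * tth s ^ 4
      + 17 * s ^ 6 * tth s ^ 8 - 15 * s ^ 6 * tth s ^ 12) / (64 * s ^ 9 * tth s ^ 5)

lemma mm1_eq {s : ℝ} (hs : 0 < s) :
    mm1 s = (tth s / s) * (3/4 + (s ^ 2 * (1 - tth s ^ 4) / tth s ^ 2) / 4) := by
  have ht := tth_pos hs
  unfold mm1; field_simp

lemma mm2_eq {s : ℝ} (hs : 0 < s) :
    s ^ 4 * mm2 s = (tth s / s) * (-(3/16) + (s ^ 2 * (1 - tth s ^ 4) / tth s ^ 2) / 4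
      - (s ^ 4 * (1 - tth s ^ 4) / tth s ^ 4) * (3 * tth s ^ 4 + 1) / 16) := by
  have ht := tth_pos hs
  unfold mm2; field_simp; ring

lemma mm23_eq {s : ℝ} (hs : 0 < s) :
    4 * (s ^ 4 * mm2 s) + 2 * (s ^ 8 * mm3 s) =
    (tth s / s) * (-(9/32) + (17/32) * (s ^ 2 * (1 - tth s ^ 4) / tth s ^ 2)
      - (11/32) * (s ^ 4 * (1 - tth s ^ 4) / tth s ^ 4) * (3 * tth s ^ 4 + 1)
      + (1/32) * (s ^ 6 * (1 - tth s ^ 4) / tth s ^ 6) * (15 * tth s ^ 8 - 2 * tth s ^ 4 + 3)) := by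
  have ht := tth_pos hs
  unfold mm2 mm3; field_simp; ring

lemma A1_nonneg {s : ℝ} (hs : 0 < s) : 0 ≤ s ^ 2 * (1 - tth s ^ 4) / tth s ^ 2 := by
  have ht := tth_pos hs
  have hσ : 0 ≤ 1 - tth s ^ 4 := by linarith [tth_lt_one (s := s)]
  positivity

lemma A2_nonneg {s : ℝ} (hs : 0 < s) : 0 ≤ s ^ 4 * (1 - tth s ^ 4) / tth s ^ 4 := by
  have ht := tth_pos hs
  have hσ : 0 ≤ 1 - tth s ^ 4 := by linarith [tth_lt_one (s := s)]
  positivity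

lemma A3_nonneg {s : ℝ} (hs : 0 < s) : 0 ≤ s ^ 6 * (1 - tth s ^ 4) / tth s ^ 6 := by
  have ht := tth_pos hs
  have hσ : 0 ≤ 1 - tth s ^ 4 := by linarith [tth_lt_one (s := s)]
  positivity

lemma W_le_one {s : ℝ} (hs : 0 < s) : tth s / s ≤ 1 :=
  div_le_one_of_le₀ (tth_le hs.le) hs.le

lemma W_nonneg {s : ℝ} (hs : 0 < s) : 0 ≤ tth s / s :=
  div_nonneg (tth_pos hs).le hs.le

lemma mm1_pos {s : ℝ} (hs : 0 < s) : 0 < mm1 s := by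
  have ht := tth_pos hs
  have hσ : 0 ≤ 1 - tth s ^ 4 := by linarith [tth_lt_one (s := s)]
  unfold mm1
  apply div_pos
  · nlinarith [sq_nonneg s, pow_pos ht 2]
  · positivity

lemma mm1_le {s : ℝ} (hs : 0 < s) : mm1 s ≤ 6 := by
  rw [mm1_eq hs]
  have h1 := A1_bound hs
  have h2 := A1_nonneg hs
  calc (tth s / s) * (3/4 + (s ^ 2 * (1 - tth s ^ 4) / tth s ^ 2) / 4)
      ≤ 1 * (3/4 + 20/4) :=
        mul_le_mul (W_le_one hs) (by linarith) (by linarith) zero_le_one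
  _ ≤ 6 := by norm_num

lemma mm1_ge {s : ℝ} (hs : 0 < s) : (tth s / s) * (3/4) ≤ mm1 s := by
  rw [mm1_eq hs]
  have h2 := A1_nonneg hs
  apply mul_le_mul_of_nonneg_left (by linarith) (W_nonneg hs)

lemma mm2_absW {s : ℝ} (hs : 0 < s) : |s ^ 4 * mm2 s| ≤ (tth s / s) * 13 := by
  rw [mm2_eq hs, abs_mul, abs_of_nonneg (W_nonneg hs)]
  apply mul_le_mul_of_nonneg_left _ (W_nonneg hs)
  rw [abs_le]
  have h1 := A1_bound hs; have h2 := A1_nonneg hs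
  have h3 := A2_bound hs; have h4 := A2_nonneg hs
  have h5 : 0 ≤ tth s ^ 4 := by positivity
  have h6 := tth_lt_one (s := s)
  constructor
  · nlinarith [mul_le_mul h3 (show 3 * tth s ^ 4 + 1 ≤ 4 by linarith)
      (by linarith) (by norm_num : (0:ℝ) ≤ 29)]
  · nlinarith [mul_nonneg h4 (show (0:ℝ) ≤ 3 * tth s ^ 4 + 1 by linarith)]

lemma mm2_abs {s : ℝ} (hs : 0 < s) : |s ^ 4 * mm2 s| ≤ 13 := by
  have := mm2_absW hs
  have hW := W_le_one hs
  nlinarith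

lemma mm2_vs_mm1 {s : ℝ} (hs : 0 < s) : |s ^ 4 * mm2 s| ≤ 18 * mm1 s := by
  have h1 := mm2_absW hs
  have h2 := mm1_ge hs
  have h3 := W_nonneg hs
  nlinarith

lemma mm23_abs {s : ℝ} (hs : 0 < s) : |4 * (s ^ 4 * mm2 s) + 2 * (s ^ 8 * mm3 s)| ≤ 72 := by
  rw [mm23_eq hs, abs_mul, abs_of_nonneg (W_nonneg hs)]
  have hW := W_le_one hs; have hW0 := W_nonneg hs
  have h1 := A1_bound hs; have h2 := A1_nonneg hs
  have h3 := A2_bound hs; have h4 := A2_nonneg hs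
  have h5 := A3_bound hs; have h6 := A3_nonneg hs
  have h7 : 0 ≤ tth s ^ 4 := by positivity
  have h8 := tth_lt_one (s := s)
  have h9 : 0 ≤ tth s ^ 8 := by positivity
  have h10 : tth s ^ 8 ≤ 1 := by
    have : tth s ^ 8 = (tth s ^ 4) ^ 2 := by ring
    nlinarith
  have habs : |(-(9/32) + (17/32) * (s ^ 2 * (1 - tth s ^ 4) / tth s ^ 2)
      - (11/32) * (s ^ 4 * (1 - tth s ^ 4) / tth s ^ 4) * (3 * tth s ^ 4 + 1)
      + (1/32) * (s ^ 6 * (1 - tth s ^ 4) / tth s ^ 6) * (15 * tth s ^ 8 - 2 * tth s ^ 4 + 3))| ≤ 72 := by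
    rw [abs_le]
    constructor
    · nlinarith [mul_le_mul h3 (show 3 * tth s ^ 4 + 1 ≤ 4 by linarith) (by linarith)
          (by norm_num : (0:ℝ) ≤ 29),
        mul_nonneg h6 (show (0:ℝ) ≤ 15 * tth s ^ 8 - 2 * tth s ^ 4 + 3 by nlinarith)]
    · nlinarith [mul_nonneg h4 (show (0:ℝ) ≤ 3 * tth s ^ 4 + 1 by linarith),
        mul_le_mul h5 (show 15 * tth s ^ 8 - 2 * tth s ^ 4 + 3 ≤ 16 by nlinarith) (by nlinarith)
          (by norm_num : (0:ℝ) ≤ 42)]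
  nlinarith [abs_nonneg (-(9/32) + (17/32) * (s ^ 2 * (1 - tth s ^ 4) / tth s ^ 2)
      - (11/32) * (s ^ 4 * (1 - tth s ^ 4) / tth s ^ 4) * (3 * tth s ^ 4 + 1)
      + (1/32) * (s ^ 6 * (1 - tth s ^ 4) / tth s ^ 6) * (15 * tth s ^ 8 - 2 * tth s ^ 4 + 3))]
lemma hasDerivAt_tth {s : ℝ} (hs : 0 < s) :
    HasDerivAt tth (s * (1 - tth s ^ 4) / tth s) s := by
  have hτ : 0 < Real.tanh (s ^ 2) := tanh_pos' (by positivity)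
  have hp : HasDerivAt (fun y : ℝ => y ^ 2) (2 * s) s := by
    simpa using hasDerivAt_pow 2 s
  have h1 : HasDerivAt (fun y : ℝ => Real.tanh (y ^ 2))
      ((1 - Real.tanh (s ^ 2) ^ 2) * (2 * s)) s :=
    HasDerivAt.comp (h₂ := Real.tanh) s (hasDerivAt_tanh' (s ^ 2)) hp
  have h2 := (Real.hasDerivAt_sqrt hτ.ne').comp s h1
  have ht := tth_pos hs
  have ht2 : tth s ^ 2 = Real.tanh (s ^ 2) := tth_sq
  refine h2.congr_deriv ?_
  rw [show Real.sqrt (Real.tanh (s ^ 2)) = tth s from rfl, ← ht2]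
  field_simp

lemma hasDerivAt_mm0 {s : ℝ} (hs : 0 < s) :
    HasDerivAt (fun y => y ^ 3 * tth y) (4 * s ^ 3 * mm1 s) s := by
  have hD := hasDerivAt_tth hs
  have h := (hasDerivAt_pow 3 s).mul hD
  refine h.congr_deriv ?_
  have ht := tth_pos hs
  unfold mm1
  field_simp
  ring

lemma hasDerivAt_mm1 {s : ℝ} (hs : 0 < s) :
    HasDerivAt mm1 (4 * s ^ 3 * mm2 s) s := by
  have hD := hasDerivAt_tth hs
  have ht := tth_pos hs
  have hN : HasDerivAt (fun y => 3 * tth y ^ 2 + y ^ 2 * (1 - tth y ^ 4))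
      (3 * (2 * tth s ^ 1 * (s * (1 - tth s ^ 4) / tth s))
        + ((2 * s) * (1 - tth s ^ 4) + s ^ 2 * (0 - 4 * tth s ^ 3 * (s * (1 - tth s ^ 4) / tth s)))) s := by
    apply HasDerivAt.add
    · exact (hD.pow 2).const_mul 3
    · have hq : HasDerivAt (fun y : ℝ => y ^ 2) (2 * s) s := by simpa using hasDerivAt_pow 2 s
      exact hq.mul ((hasDerivAt_const s 1).sub (hD.pow 4))
  have hDen : HasDerivAt (fun y => 4 * y * tth y)
      (4 * tth s + (4 * s) * (s * (1 - tth s ^ 4) / tth s)) s := by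
    have h4 : HasDerivAt (fun y : ℝ => 4 * y) 4 s := by
      simpa using (hasDerivAt_id s).const_mul (4:ℝ)
    have := h4.mul hD
    refine this.congr_deriv ?_
    all_goals ring
  have hne : 4 * s * tth s ≠ 0 := by positivity
  have h := hN.div hDen hne
  have heq : mm1 = fun y => (3 * tth y ^ 2 + y ^ 2 * (1 - tth y ^ 4)) / (4 * y * tth y) := rfl
  rw [heq]
  refine h.congr_deriv ?_
  unfold mm2
  field_simp
  ring

lemma hasDerivAt_mm2 {s : ℝ} (hs : 0 < s) :
    HasDerivAt mm2 (4 * s ^ 3 * mm3 s) s := by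
  have hD := hasDerivAt_tth hs
  have ht := tth_pos hs
  set Dt := s * (1 - tth s ^ 4) / tth s with hDt
  have hp2 : HasDerivAt (fun y : ℝ => y ^ 2) (2 * s) s := by simpa using hasDerivAt_pow 2 s
  have hp4 : HasDerivAt (fun y : ℝ => y ^ 4) (4 * s ^ 3) s := by simpa using hasDerivAt_pow 4 s
  have hp5 : HasDerivAt (fun y : ℝ => y ^ 5) (5 * s ^ 4) s := by simpa using hasDerivAt_pow 5 s
  have hN : HasDerivAt (fun y => -3 * tth y ^ 4 + 4 * y ^ 2 * tth y ^ 2 - 4 * y ^ 2 * tth y ^ 6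
      - y ^ 4 - 2 * y ^ 4 * tth y ^ 4 + 3 * y ^ 4 * tth y ^ 8)
      ((4 * tth s ^ 3 * Dt) * (-3)
        + ((2 * s) * 4 * tth s ^ 2 + 4 * s ^ 2 * (2 * tth s ^ 1 * Dt))
        - ((2 * s) * 4 * tth s ^ 6 + 4 * s ^ 2 * (6 * tth s ^ 5 * Dt))
        - 4 * s ^ 3
        - ((4 * s ^ 3) * 2 * tth s ^ 4 + 2 * s ^ 4 * (4 * tth s ^ 3 * Dt))
        + ((4 * s ^ 3) * 3 * tth s ^ 8 + 3 * s ^ 4 * (8 * tth s ^ 7 * Dt))) s := by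
    have e1 : HasDerivAt (fun y => -3 * tth y ^ 4) ((4 * tth s ^ 3 * Dt) * (-3)) s := by
      simpa [mul_comm] using (hD.pow 4).const_mul (-3:ℝ)
    have e2 : HasDerivAt (fun y => 4 * y ^ 2 * tth y ^ 2)
        ((2 * s) * 4 * tth s ^ 2 + 4 * s ^ 2 * (2 * tth s ^ 1 * Dt)) s := by
      have := ((hp2.const_mul (4:ℝ)).mul (hD.pow 2))
      refine this.congr_deriv ?_ <;> simp only [Pi.pow_apply] <;> ring
    have e3 : HasDerivAt (fun y => 4 * y ^ 2 * tth y ^ 6)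
        ((2 * s) * 4 * tth s ^ 6 + 4 * s ^ 2 * (6 * tth s ^ 5 * Dt)) s := by
      have := ((hp2.const_mul (4:ℝ)).mul (hD.pow 6))
      refine this.congr_deriv ?_ <;> simp only [Pi.pow_apply] <;> ring
    have e4 : HasDerivAt (fun y : ℝ => y ^ 4) (4 * s ^ 3) s := hp4
    have e5 : HasDerivAt (fun y => 2 * y ^ 4 * tth y ^ 4)
        ((4 * s ^ 3) * 2 * tth s ^ 4 + 2 * s ^ 4 * (4 * tth s ^ 3 * Dt)) s := by
      have := ((hp4.const_mul (2:ℝ)).mul (hD.pow 4))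
      refine this.congr_deriv ?_ <;> simp only [Pi.pow_apply] <;> ring
    have e6 : HasDerivAt (fun y => 3 * y ^ 4 * tth y ^ 8)
        ((4 * s ^ 3) * 3 * tth s ^ 8 + 3 * s ^ 4 * (8 * tth s ^ 7 * Dt)) s := by
      have := ((hp4.const_mul (3:ℝ)).mul (hD.pow 8))
      refine this.congr_deriv ?_ <;> simp only [Pi.pow_apply] <;> ring
    exact ((((e1.add e2).sub e3).sub e4).sub e5).add e6
  have hDen : HasDerivAt (fun y => 16 * y ^ 5 * tth y ^ 3)
      ((5 * s ^ 4) * 16 * tth s ^ 3 + 16 * s ^ 5 * (3 * tth s ^ 2 * Dt)) s := by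
    have := ((hp5.const_mul (16:ℝ)).mul (hD.pow 3))
    refine this.congr_deriv ?_ <;> simp only [Pi.pow_apply] <;> ring
  have hne : 16 * s ^ 5 * tth s ^ 3 ≠ 0 := by positivity
  have h := hN.div hDen hne
  have heq : mm2 = fun y => (-3 * tth y ^ 4 + 4 * y ^ 2 * tth y ^ 2 - 4 * y ^ 2 * tth y ^ 6
      - y ^ 4 - 2 * y ^ 4 * tth y ^ 4 + 3 * y ^ 4 * tth y ^ 8) / (16 * y ^ 5 * tth y ^ 3) := rfl
  rw [heq]
  refine h.congr_deriv ?_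
  rw [hDt]
  unfold mm3
  field_simp
  ring
def srt (u : ℝ) : ℝ := Real.sqrt (Real.sqrt u)

def el1 (u : ℝ) : ℝ := mm1 (srt u)
def el2 (u : ℝ) : ℝ := mm2 (srt u)
def el3 (u : ℝ) : ℝ := mm3 (srt u)

lemma srt_pos {u : ℝ} (hu : 0 < u) : 0 < srt u :=
  Real.sqrt_pos.2 (Real.sqrt_pos.2 hu)

lemma srt_sq {u : ℝ} : srt u ^ 2 = Real.sqrt u :=
  Real.sq_sqrt (Real.sqrt_nonneg u)

lemma srt_pow4 {u : ℝ} (hu : 0 ≤ u) : srt u ^ 4 = u := by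
  have : srt u ^ 4 = (srt u ^ 2) ^ 2 := by ring
  rw [this, srt_sq, Real.sq_sqrt hu]

lemma hasDerivAt_srt {u : ℝ} (hu : 0 < u) :
    HasDerivAt srt (1 / (4 * srt u ^ 3)) u := by
  have h1 : Real.sqrt u ≠ 0 := (Real.sqrt_pos.2 hu).ne'
  have h := (Real.hasDerivAt_sqrt h1).comp u (Real.hasDerivAt_sqrt hu.ne')
  have hsp := srt_pos hu
  have hup := Real.sqrt_pos.2 hu
  refine h.congr_deriv ?_
  rw [show Real.sqrt (Real.sqrt u) = srt u from rfl, ← srt_sq]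
  field_simp
  ring

lemma hasDerivAt_el1 {u : ℝ} (hu : 0 < u) : HasDerivAt el1 (el2 u) u := by
  have hs := srt_pos hu
  have h := (hasDerivAt_mm1 hs).comp u (hasDerivAt_srt hu)
  have : el1 = fun v => mm1 (srt v) := rfl
  rw [this]
  refine h.congr_deriv ?_
  unfold el2
  field_simp

lemma hasDerivAt_el2 {u : ℝ} (hu : 0 < u) : HasDerivAt el2 (el3 u) u := by
  have hs := srt_pos hu
  have h := (hasDerivAt_mm2 hs).comp u (hasDerivAt_srt hu)
  have : el2 = fun v => mm2 (srt v) := rfl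
  rw [this]
  refine h.congr_deriv ?_
  unfold el3
  field_simp

lemma lam_eq_mm0 {u : ℝ} (hu : 0 < u) : lam u = srt u ^ 3 * tth (srt u) := by
  have hs := srt_pos hu
  unfold lam Lam tth
  rw [srt_sq]
  congr 1
  rw [show Real.sqrt u = srt u ^ 2 from srt_sq.symm,
    ← Real.rpow_natCast (srt u) 2, ← Real.rpow_mul hs.le, ← Real.rpow_natCast (srt u) 3]
  norm_num

lemma lam_le_self {u : ℝ} (hu : 0 < u) : lam u ≤ u := by
  rw [lam_eq_mm0 hu]
  have hs := srt_pos hu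
  have h1 : tth (srt u) ≤ srt u := tth_le hs.le
  calc srt u ^ 3 * tth (srt u) ≤ srt u ^ 3 * srt u :=
        mul_le_mul_of_nonneg_left h1 (by positivity)
  _ = srt u ^ 4 := by ring
  _ = u := srt_pow4 hu.le

lemma lam_nonneg {u : ℝ} (hu : 0 < u) : 0 ≤ lam u := by
  rw [lam_eq_mm0 hu]
  have hs := srt_pos hu
  have := (tth_pos hs).le
  positivity

lemma hasDerivAt_lam {u : ℝ} (hu : 0 < u) : HasDerivAt lam (el1 u) u := by
  have hs := srt_pos hu
  have h := (hasDerivAt_mm0 hs).comp u (hasDerivAt_srt hu)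
  have h2 : HasDerivAt (fun v => srt v ^ 3 * tth (srt v)) (el1 u) u := by
    refine h.congr_deriv ?_
    unfold el1
    field_simp
  apply h2.congr_of_eventuallyEq
  filter_upwards [isOpen_Ioi.mem_nhds (Set.mem_Ioi.2 hu)] with v hv
  exact lam_eq_mm0 (Set.mem_Ioi.1 hv)

lemma deriv_lam_eq {u : ℝ} (hu : 0 < u) : deriv lam u = el1 u :=
  (hasDerivAt_lam hu).deriv

lemma deriv2_lam_eq {u : ℝ} (hu : 0 < u) : deriv (deriv lam) u = el2 u := by
  have hev : deriv lam =ᶠ[nhds u] el1 := by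
    filter_upwards [isOpen_Ioi.mem_nhds (Set.mem_Ioi.2 hu)] with v hv
    exact deriv_lam_eq (Set.mem_Ioi.1 hv)
  rw [hev.deriv_eq]
  exact (hasDerivAt_el1 hu).deriv
lemma uIcc_abs_le {z x u : ℝ} (hu : u ∈ Set.uIcc z x) : |u - z| ≤ |x - z| := by
  rcases le_total z x with h | h
  · rw [Set.uIcc_of_le h] at hu
    rw [abs_of_nonneg (by linarith [hu.1]), abs_of_nonneg (by linarith)]
    linarith [hu.2]
  · rw [Set.uIcc_of_ge h] at hu
    rw [abs_of_nonpos (by linarith [hu.2]), abs_of_nonpos (by linarith)]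
    linarith [hu.1]

lemma taylor_bound {f f' f'' : ℝ → ℝ} {z x M : ℝ}
    (hd1 : ∀ u ∈ Set.uIcc z x, HasDerivAt f (f' u) u)
    (hd2 : ∀ u ∈ Set.uIcc z x, HasDerivAt f' (f'' u) u)
    (hb : ∀ u ∈ Set.uIcc z x, |f'' u| ≤ M) :
    |f x - f z - f' z * (x - z)| ≤ M * (x - z) ^ 2 := by
  have hconv : Convex ℝ (Set.uIcc z x) := convex_uIcc z x
  have hz : z ∈ Set.uIcc z x := Set.left_mem_uIcc
  have hx : x ∈ Set.uIcc z x := Set.right_mem_uIcc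
  have hM : 0 ≤ M := le_trans (abs_nonneg _) (hb z hz)
  have step1 : ∀ u ∈ Set.uIcc z x, |f' u - f' z| ≤ M * |x - z| := by
    intro u hu
    have h := hconv.norm_image_sub_le_of_norm_hasDerivWithin_le
      (fun v hv => (hd2 v hv).hasDerivWithinAt)
      (fun v hv => by simpa [Real.norm_eq_abs] using hb v hv) hz hu
    calc |f' u - f' z| ≤ M * |u - z| := by simpa [Real.norm_eq_abs] using h
    _ ≤ M * |x - z| := mul_le_mul_of_nonneg_left (uIcc_abs_le hu) hM
  have hft : ∀ v ∈ Set.uIcc z x,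
      HasDerivWithinAt (fun t => f t - f' z * t) (f' v - f' z) (Set.uIcc z x) v := by
    intro v hv
    have h1 := (hd1 v hv).sub ((hasDerivAt_id v).const_mul (f' z))
    refine h1.hasDerivWithinAt.congr_deriv ?_
    ring
  have step2 := hconv.norm_image_sub_le_of_norm_hasDerivWithin_le hft
    (fun v hv => by simpa [Real.norm_eq_abs] using step1 v hv) hz hx
  have heq : (f x - f' z * x) - (f z - f' z * z) = f x - f z - f' z * (x - z) := by ring
  rw [Real.norm_eq_abs, Real.norm_eq_abs, heq] at step2
  calc |f x - f z - f' z * (x - z)| ≤ M * |x - z| * |x - z| := step2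
  _ = M * (x - z) ^ 2 := by rw [mul_assoc, ← abs_mul, abs_mul_self]; ring

/-! ### bounds on the `el` functions -/

lemma el1_pos {u : ℝ} (hu : 0 < u) : 0 < el1 u := mm1_pos (srt_pos hu)

lemma el1_le {u : ℝ} (hu : 0 < u) : el1 u ≤ 6 := mm1_le (srt_pos hu)

lemma el2_bound {u : ℝ} (hu : 0 < u) : |el2 u| * u ≤ 13 := by
  have h := mm2_abs (srt_pos hu)
  rw [abs_mul, abs_of_nonneg (by positivity : (0:ℝ) ≤ srt u ^ 4), srt_pow4 hu.le,
    mul_comm] at h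
  exact h

lemma el12_ratio {u : ℝ} (hu : 0 < u) : |2 * el1 u + 2 * u * el2 u| ≤ 40 * el1 u := by
  have h := mm2_vs_mm1 (srt_pos hu)
  rw [show srt u ^ 4 * mm2 (srt u) = u * el2 u from by rw [srt_pow4 hu.le]; rfl] at h
  have h3 : mm1 (srt u) = el1 u := rfl
  rw [h3] at h
  have h1 := el1_pos hu
  rw [show (2 * u * el2 u : ℝ) = 2 * (u * el2 u) from by ring]
  have h2 := abs_add_le (2 * el1 u) (2 * (u * el2 u))
  rw [abs_mul, abs_mul, abs_of_nonneg h1.le,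
    show |(2:ℝ)| = 2 from abs_of_nonneg (by norm_num)] at h2
  nlinarith [abs_nonneg (u * el2 u)]

lemma el23_bound {u : ℝ} (hu : 0 < u) : |4 * el2 u + 2 * u * el3 u| * u ≤ 72 := by
  have h := mm23_abs (srt_pos hu)
  have e1 : srt u ^ 4 * mm2 (srt u) = u * el2 u := by rw [srt_pow4 hu.le]; rfl
  have e2 : srt u ^ 8 * mm3 (srt u) = u ^ 2 * el3 u := by
    rw [show srt u ^ 8 = (srt u ^ 4) ^ 2 from by ring, srt_pow4 hu.le]; rfl
  rw [e1, e2] at h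
  have heq : |4 * el2 u + 2 * u * el3 u| * u = |4 * (u * el2 u) + 2 * (u ^ 2 * el3 u)| := by
    rw [show (|4 * el2 u + 2 * u * el3 u| * u : ℝ)
        = |4 * el2 u + 2 * u * el3 u| * |u| from by rw [abs_of_nonneg hu.le], ← abs_mul]
    congr 1
    ring
  rw [heq]
  exact h

/-! ### the core estimate -/

lemma core_est {ν X Y Z : ℝ} (hν : ν = 1 ∨ ν = -1) (hX : 0 < X) (hY : 0 < Y) (hZ : 0 < Z)
    (hZl : X / 2 ≤ Z) (hYX : Y ≤ X) (hXZ : (X - Z) ^ 2 ≤ 9 * (X * Y)) :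
    |(-(2 * X * el1 X - 2 * Z * el1 Z - ν * (2 * Y * el1 Y)))
      + ((2 * el2 Z * Z + 2 * el1 Z) / el1 Z) * (lam X - lam Z - ν * lam Y)| ≤ 15000 * Y := by
  set R := (2 * el2 Z * Z + 2 * el1 Z) / el1 Z with hRdef
  have hl1Z := el1_pos hZ
  have hRl1 : R * el1 Z = 2 * el2 Z * Z + 2 * el1 Z := div_mul_cancel₀ _ hl1Z.ne'
  have hR : |R| ≤ 40 := by
    have h := el12_ratio hZ
    rw [hRdef, abs_div, abs_of_nonneg hl1Z.le, div_le_iff₀ hl1Z]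
    calc |2 * el2 Z * Z + 2 * el1 Z| = |2 * el1 Z + 2 * Z * el2 Z| := by ring_nf
    _ ≤ 40 * el1 Z := h
  have hmem : ∀ u ∈ Set.uIcc Z X, 0 < u ∧ X / 2 ≤ u := by
    intro u hu
    rcases Set.mem_uIcc.1 hu with ⟨h1, _⟩ | ⟨h1, _⟩ <;> constructor <;> linarith
  have hg : ∀ u ∈ Set.uIcc Z X, HasDerivAt (fun v => 2 * v * el1 v)
      ((fun v => 2 * el1 v + 2 * v * el2 v) u) u := by
    intro u hu
    obtain ⟨hu0, _⟩ := hmem u hu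
    have hid : HasDerivAt (fun v : ℝ => 2 * v) 2 u := by
      simpa using (hasDerivAt_id u).const_mul (2:ℝ)
    exact hid.mul (hasDerivAt_el1 hu0)
  have hgd : ∀ u ∈ Set.uIcc Z X, HasDerivAt (fun v => 2 * el1 v + 2 * v * el2 v)
      ((fun v => 4 * el2 v + 2 * v * el3 v) u) u := by
    intro u hu
    obtain ⟨hu0, _⟩ := hmem u hu
    have hid : HasDerivAt (fun v : ℝ => 2 * v) 2 u := by
      simpa using (hasDerivAt_id u).const_mul (2:ℝ)
    have h := ((hasDerivAt_el1 hu0).const_mul (2:ℝ)).add (hid.mul (hasDerivAt_el2 hu0))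
    refine h.congr_deriv ?_
    show _ = (4 : ℝ) * el2 u + 2 * u * el3 u
    ring
  have hb2 : ∀ u ∈ Set.uIcc Z X, |(fun v => 4 * el2 v + 2 * v * el3 v) u| ≤ 144 / X := by
    intro u hu
    obtain ⟨hu0, hu2⟩ := hmem u hu
    have h := el23_bound hu0
    show |4 * el2 u + 2 * u * el3 u| ≤ 144 / X
    rw [le_div_iff₀ hX]
    nlinarith [abs_nonneg (4 * el2 u + 2 * u * el3 u)]
  have hlamd : ∀ u ∈ Set.uIcc Z X, HasDerivAt lam ((fun v => el1 v) u) u :=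
    fun u hu => hasDerivAt_lam (hmem u hu).1
  have hlamdd : ∀ u ∈ Set.uIcc Z X, HasDerivAt (fun v => el1 v) ((fun v => el2 v) u) u :=
    fun u hu => hasDerivAt_el1 (hmem u hu).1
  have hbl : ∀ u ∈ Set.uIcc Z X, |(fun v => el2 v) u| ≤ 26 / X := by
    intro u hu
    obtain ⟨hu0, hu2⟩ := hmem u hu
    have h := el2_bound hu0
    show |el2 u| ≤ 26 / X
    rw [le_div_iff₀ hX]
    nlinarith [abs_nonneg (el2 u)]
  have T1 : |2 * X * el1 X - 2 * Z * el1 Z - (2 * el1 Z + 2 * Z * el2 Z) * (X - Z)|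
      ≤ 144 / X * (X - Z) ^ 2 := taylor_bound hg hgd hb2
  have T2 : |lam X - lam Z - el1 Z * (X - Z)| ≤ 26 / X * (X - Z) ^ 2 :=
    taylor_bound hlamd hlamdd hbl
  have hT1' : 144 / X * (X - Z) ^ 2 ≤ 1296 * Y := by
    rw [div_mul_eq_mul_div, div_le_iff₀ hX]
    nlinarith
  have hT2' : 26 / X * (X - Z) ^ 2 ≤ 234 * Y := by
    rw [div_mul_eq_mul_div, div_le_iff₀ hX]
    nlinarith
  have hggY : |2 * Y * el1 Y| ≤ 12 * Y := by
    rw [abs_of_nonneg (mul_nonneg (by positivity) (el1_pos hY).le)]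
    nlinarith [el1_le hY, el1_pos hY]
  have hlamY : |lam Y| ≤ Y := by
    rw [abs_of_nonneg (lam_nonneg hY)]
    exact lam_le_self hY
  have hν1 : |ν| = 1 := by rcases hν with h | h <;> simp [h]
  have hsplit : (-(2 * X * el1 X - 2 * Z * el1 Z - ν * (2 * Y * el1 Y)))
      + R * (lam X - lam Z - ν * lam Y)
      = -(2 * X * el1 X - 2 * Z * el1 Z - (2 * el1 Z + 2 * Z * el2 Z) * (X - Z))
        + (R * (lam X - lam Z - el1 Z * (X - Z)) + ν * (2 * Y * el1 Y - R * lam Y)) := by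
    linear_combination (X - Z) * hRl1
  rw [hsplit]
  have hRT2 : |R * (lam X - lam Z - el1 Z * (X - Z))| ≤ 40 * (234 * Y) := by
    rw [abs_mul]
    have h0 := abs_nonneg (lam X - lam Z - el1 Z * (X - Z))
    nlinarith [abs_nonneg R]
  have hνT : |ν * (2 * Y * el1 Y - R * lam Y)| ≤ 52 * Y := by
    rw [abs_mul, hν1, one_mul]
    have h1 : |R * lam Y| ≤ 40 * Y := by
      rw [abs_mul]
      nlinarith [abs_nonneg R, abs_nonneg (lam Y)]
    calc |2 * Y * el1 Y - R * lam Y| = |2 * Y * el1 Y + -(R * lam Y)| := by rw [sub_eq_add_neg]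
    _ ≤ |2 * Y * el1 Y| + |-(R * lam Y)| := abs_add_le _ _
    _ = |2 * Y * el1 Y| + |R * lam Y| := by rw [abs_neg]
    _ ≤ 52 * Y := by linarith
  have habs1 := abs_add_le (-(2 * X * el1 X - 2 * Z * el1 Z - (2 * el1 Z + 2 * Z * el2 Z) * (X - Z)))
    (R * (lam X - lam Z - el1 Z * (X - Z)) + ν * (2 * Y * el1 Y - R * lam Y))
  have habs2 := abs_add_le (R * (lam X - lam Z - el1 Z * (X - Z)))
    (ν * (2 * Y * el1 Y - R * lam Y))
  rw [abs_neg] at habs1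
  linarith
/-! ### gradient and assembly -/

lemma dotE_grad (F : E2 → ℝ) (w v : E2) : dotE v (gradient F w) = (fderiv ℝ F w) v := by
  have h1 : dotE v (gradient F w) = (inner ℝ (gradient F w) v : ℝ) := by
    simp only [dotE, PiLp.inner_apply, RCLike.inner_apply, conj_trivial]
  rw [h1, gradient, InnerProductSpace.toDual_symm_apply]

lemma Lam_norm (w : E2) : Lam ‖w‖ = lam (‖w‖ ^ 2) := by
  unfold lam
  rw [Real.sqrt_sq (norm_nonneg w)]

lemma hasFDerivAt_lam_normsq {w : E2} (hw : 0 < ‖w‖) :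
    HasFDerivAt (fun ζ : E2 => lam (‖ζ‖ ^ 2))
      (el1 (‖w‖ ^ 2) • (2 • (innerSL ℝ w))) w := by
  have hN : HasFDerivAt (fun ζ : E2 => ‖ζ‖ ^ 2)
      (2 • ((innerSL ℝ w).comp (ContinuousLinearMap.id ℝ E2))) w := by
    simpa using (hasFDerivAt_id w).norm_sq
  have hx : 0 < ‖w‖ ^ 2 := by positivity
  have h := (hasDerivAt_lam hx).comp_hasFDerivAt w hN
  exact h

lemma hasFDerivAt_lam_normsq_sub {ξ η : E2} (hw : 0 < ‖ξ - η‖) :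
    HasFDerivAt (fun ζ : E2 => lam (‖ζ - η‖ ^ 2))
      (el1 (‖ξ - η‖ ^ 2) • (2 • ((innerSL ℝ (ξ - η)).comp (ContinuousLinearMap.id ℝ E2)))) ξ := by
  have hsub : HasFDerivAt (fun ζ : E2 => ζ - η) (ContinuousLinearMap.id ℝ E2) ξ :=
    (hasFDerivAt_id ξ).sub_const η
  have hN := hsub.norm_sq
  have hx : 0 < ‖ξ - η‖ ^ 2 := by positivity
  exact HasDerivAt.comp_hasFDerivAt (h₂ := lam) ξ (hasDerivAt_lam hx) hN

lemma hasFDerivAt_lam_normsq_sub' {ξ η : E2} (hw : 0 < ‖ξ - η‖) :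
    HasFDerivAt (fun ζ : E2 => lam (‖ξ - ζ‖ ^ 2))
      (el1 (‖ξ - η‖ ^ 2) • (2 • ((innerSL ℝ (ξ - η)).comp
        (0 - ContinuousLinearMap.id ℝ E2)))) η := by
  have hsub : HasFDerivAt (fun ζ : E2 => ξ - ζ) (0 - ContinuousLinearMap.id ℝ E2) η :=
    (hasFDerivAt_const ξ η).sub (hasFDerivAt_id η)
  have hN := hsub.norm_sq
  have hx : 0 < ‖ξ - η‖ ^ 2 := by positivity
  exact HasDerivAt.comp_hasFDerivAt (h₂ := lam) η (hasDerivAt_lam hx) hN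
set_option maxHeartbeats 1000000 in
open scoped RealInnerProductSpace in
theorem stmt14 :
    ∃ C : ℝ, 0 < C ∧
      ∀ ν : ℝ, (ν = 1 ∨ ν = -1) →
        ∀ ξ η : E2, 0 < ‖η‖ → ‖η‖ ≤ (2 : ℝ) ^ (-10 : ℤ) * ‖ξ‖ →
          |(-(dotE ξ (gradient (fun ζ : E2 => Phi 1 ν ζ η) ξ)) -
              dotE η (gradient (fun ζ : E2 => Phi 1 ν ξ ζ) η)) -
              ctilde (ξ - η) * Phi 1 ν ξ η| ≤ C * ‖η‖ ^ 2 := by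
  refine ⟨15000, by norm_num, ?_⟩
  intro ν hν ξ η hη hle
  have h2pow : ((2:ℝ) ^ (-10:ℤ)) = 1/1024 := by norm_num
  rw [h2pow] at hle
  have hξ : 0 < ‖ξ‖ := by nlinarith
  have hsubn : (1023:ℝ)/1024 * ‖ξ‖ ≤ ‖ξ - η‖ := by
    have h := norm_sub_norm_le ξ η
    have h2 := norm_sub_norm_le ξ η
    have := abs_le.1 (abs_norm_sub_norm_le ξ η)
    linarith
  have hsubpos : 0 < ‖ξ - η‖ := lt_of_lt_of_le (by nlinarith) hsubn
  set X := ‖ξ‖ ^ 2 with hXdef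
  set Y := ‖η‖ ^ 2 with hYdef
  set Z := ‖ξ - η‖ ^ 2 with hZdef
  have hX : 0 < X := by positivity
  have hY : 0 < Y := by positivity
  have hZ : 0 < Z := by positivity
  have hZl : X / 2 ≤ Z := by
    have h := mul_self_le_mul_self (by positivity : (0:ℝ) ≤ 1023/1024 * ‖ξ‖) hsubn
    rw [hZdef, hXdef]
    nlinarith [sq_nonneg ‖ξ‖]
  have hYX : Y ≤ X := by
    rw [hYdef, hXdef]
    nlinarith
  have hinner := abs_real_inner_le_norm ξ η
  have hXZ : (X - Z) ^ 2 ≤ 9 * (X * Y) := by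
    have hZeq : Z = X - 2 * ⟪ξ, η⟫ + Y := by
      rw [hZdef, hXdef, hYdef]; exact norm_sub_sq_real ξ η
    have hi := abs_le.1 hinner
    have hb : |X - Z| ≤ 3 * (‖ξ‖ * ‖η‖) := by
      rw [hZeq, abs_le]
      constructor <;> nlinarith [hη.le, hYX]
    calc (X - Z) ^ 2 = |X - Z| ^ 2 := (sq_abs _).symm
    _ ≤ (3 * (‖ξ‖ * ‖η‖)) ^ 2 := by nlinarith [abs_nonneg (X - Z)]
    _ = 9 * (X * Y) := by rw [hXdef, hYdef]; ring
  have hfun1 : (fun ζ : E2 => Phi 1 ν ζ η)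
      = fun ζ => lam (‖ζ‖ ^ 2) - lam (‖ζ - η‖ ^ 2) - ν * lam (‖η‖ ^ 2) := by
    funext ζ; simp [Phi, Lam_norm, one_mul]
  have hfun2 : (fun ζ : E2 => Phi 1 ν ξ ζ)
      = fun ζ => lam (‖ξ‖ ^ 2) - lam (‖ξ - ζ‖ ^ 2) - ν * lam (‖ζ‖ ^ 2) := by
    funext ζ; simp [Phi, Lam_norm, one_mul]
  have hF1 : HasFDerivAt (fun ζ : E2 => lam (‖ζ‖ ^ 2) - lam (‖ζ - η‖ ^ 2) - ν * lam (‖η‖ ^ 2))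
      (el1 X • (2 • innerSL ℝ ξ)
        - el1 Z • (2 • ((innerSL ℝ (ξ - η)).comp (ContinuousLinearMap.id ℝ E2)))
        - 0) ξ :=
    ((hasFDerivAt_lam_normsq hξ).sub (hasFDerivAt_lam_normsq_sub hsubpos)).sub
      (hasFDerivAt_const _ _)
  have hF2 : HasFDerivAt (fun ζ : E2 => lam (‖ξ‖ ^ 2) - lam (‖ξ - ζ‖ ^ 2) - ν * lam (‖ζ‖ ^ 2))
      ((0 : E2 →L[ℝ] ℝ)
        - el1 Z • (2 • ((innerSL ℝ (ξ - η)).comp (0 - ContinuousLinearMap.id ℝ E2)))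
        - ν • (el1 Y • (2 • innerSL ℝ η))) η :=
    ((hasFDerivAt_const _ _).sub (hasFDerivAt_lam_normsq_sub' hsubpos)).sub
      ((hasFDerivAt_lam_normsq hη).const_mul ν)
  have hd1 : dotE ξ (gradient (fun ζ : E2 => Phi 1 ν ζ η) ξ)
      = el1 X * (2 * ⟪ξ, ξ⟫) - el1 Z * (2 * ⟪ξ - η, ξ⟫) := by
    rw [hfun1, dotE_grad, hF1.fderiv]
    simp only [ContinuousLinearMap.sub_apply, ContinuousLinearMap.smul_apply,
      ContinuousLinearMap.comp_apply, ContinuousLinearMap.zero_apply,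
      ContinuousLinearMap.coe_id', id_eq, innerSL_apply_apply, smul_eq_mul, sub_zero, nsmul_eq_mul]
    ring
  have hd2 : dotE η (gradient (fun ζ : E2 => Phi 1 ν ξ ζ) η)
      = el1 Z * (2 * ⟪ξ - η, η⟫) - ν * (el1 Y * (2 * ⟪η, η⟫)) := by
    rw [hfun2, dotE_grad, hF2.fderiv]
    simp only [ContinuousLinearMap.sub_apply, ContinuousLinearMap.smul_apply,
      ContinuousLinearMap.comp_apply, ContinuousLinearMap.zero_apply,
      ContinuousLinearMap.coe_id', id_eq, innerSL_apply_apply, smul_eq_mul, zero_sub,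
      ContinuousLinearMap.neg_apply, inner_neg_right, nsmul_eq_mul]
    ring
  have hct : ctilde (ξ - η) = -(2 * el2 Z * Z + 2 * el1 Z) / el1 Z := by
    unfold ctilde
    rw [← hZdef, deriv_lam_eq hZ, deriv2_lam_eq hZ]
  have hPhi : Phi 1 ν ξ η = lam X - lam Z - ν * lam Y := by
    unfold Phi
    rw [Lam_norm, Lam_norm, Lam_norm, one_mul, ← hXdef, ← hYdef, ← hZdef]
  have hXin : ⟪ξ, ξ⟫ = X := by rw [hXdef]; exact real_inner_self_eq_norm_sq ξ
  have hYin : ⟪η, η⟫ = Y := by rw [hYdef]; exact real_inner_self_eq_norm_sq η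
  have hZin : ⟪ξ - η, ξ⟫ - ⟪ξ - η, η⟫ = Z := by
    rw [← inner_sub_right, hZdef]
    exact real_inner_self_eq_norm_sq (ξ - η)
  have harg : (-(dotE ξ (gradient (fun ζ : E2 => Phi 1 ν ζ η) ξ)) -
      dotE η (gradient (fun ζ : E2 => Phi 1 ν ξ ζ) η)) - ctilde (ξ - η) * Phi 1 ν ξ η
      = (-(2 * X * el1 X - 2 * Z * el1 Z - ν * (2 * Y * el1 Y)))
        + ((2 * el2 Z * Z + 2 * el1 Z) / el1 Z) * (lam X - lam Z - ν * lam Y) := by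
    rw [hd1, hd2, hct, hPhi, hXin, hYin]
    rw [neg_div]
    linear_combination (2 * el1 Z) * hZin
  rw [harg]
  exact core_est hν hX hY hZ hZl hYX hXZ

end
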